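/- Let L ≥ 1, let B ∈ ℝ^{L×L} satisfy ∑_{l=0}^{L−1} b_{l,m}² = 1 for every m, let σ² > 0, and let 0 ≤ α_l ≤ α'_l for all l. Let sir_m(i) and sir'_m(i) denote the density-evolution sequences with loads (α_l) and (α'_l) respectively, i.e., sir_m(0) = 0 and, for i ≥ 1, sir_m(i) = ∑_l b_{l,m}²/(σ² + α_l ∑_{m'} b_{l,m'}²·mmse(sir_{m'}(i−1))), and likewise with (α'_l). Then sir_m(i) ≥ sir'_m(i) for all i and all m. -/

import Mathlib

/-- The minimum mean-squared error of the BPSK-input real AWGN channel with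
signal-to-noise ratio `s`. -/
noncomputable def mmse (s : ℝ) : ℝ :=
  1 - ∫ z : ℝ,
    Real.tanh (s + Real.sqrt s * z) * ((Real.sqrt (2 * Real.pi))⁻¹ * Real.exp (-z ^ 2 / 2))

open MeasureTheory Real Set

noncomputable def gφ (z : ℝ) : ℝ := (Real.sqrt (2 * Real.pi))⁻¹ * Real.exp (-z ^ 2 / 2)

lemma gφ_nonneg (z : ℝ) : 0 ≤ gφ z :=
  mul_nonneg (inv_nonneg.2 (Real.sqrt_nonneg _)) (Real.exp_pos _).le

lemma gφ_eq (z : ℝ) : gφ z = (Real.sqrt (2 * Real.pi))⁻¹ * Real.exp (-(1/2) * z ^ 2) := by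
  unfold gφ; ring_nf

lemma integrable_exp_half : Integrable (fun z : ℝ => Real.exp (-z ^ 2 / 2)) := by
  have := integrable_exp_neg_mul_sq (b := 1/2) (by norm_num)
  convert this using 2 with z
  ring_nf

lemma integrable_gφ : Integrable gφ := by
  exact integrable_exp_half.const_mul (Real.sqrt (2 * Real.pi))⁻¹

lemma integral_gφ : ∫ z : ℝ, gφ z = 1 := by
  have h : ∫ z : ℝ, Real.exp (-(1/2) * z ^ 2) = Real.sqrt (Real.pi / (1/2)) :=
    integral_gaussian (1/2)
  have h2 : ∫ z : ℝ, Real.exp (-z ^ 2 / 2) = Real.sqrt (2 * Real.pi) := by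
    rw [show (2 * Real.pi) = Real.pi / (1/2) by ring, ← h]
    congr 1 with z; ring_nf
  have hpos : (0:ℝ) < Real.sqrt (2 * Real.pi) :=
    Real.sqrt_pos.2 (by positivity)
  unfold gφ
  rw [integral_const_mul, h2, inv_mul_cancel₀ hpos.ne']

lemma tanh_lt_one (x : ℝ) : Real.tanh x < 1 := by
  rw [Real.tanh_eq_sinh_div_cosh, div_lt_one (Real.cosh_pos x)]
  exact Real.sinh_lt_cosh x

lemma neg_one_lt_tanh (x : ℝ) : -1 < Real.tanh x := by
  rw [Real.tanh_eq_sinh_div_cosh, lt_div_iff₀ (Real.cosh_pos x)]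
  have := Real.sinh_lt_cosh (x := -x)
  simp only [Real.sinh_neg, Real.cosh_neg] at this
  linarith

lemma abs_tanh_le_one (x : ℝ) : |Real.tanh x| ≤ 1 :=
  abs_le.2 ⟨(_root_.neg_one_lt_tanh x).le, (_root_.tanh_lt_one x).le⟩

lemma tanh_sq_le_one (x : ℝ) : Real.tanh x ^ 2 ≤ 1 := by
  have := abs_tanh_le_one x
  nlinarith [abs_nonneg (Real.tanh x), sq_abs (Real.tanh x)]

lemma hasDerivAt_tanh (x : ℝ) : HasDerivAt Real.tanh (1 - Real.tanh x ^ 2) x := by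
  have h : HasDerivAt (fun y => Real.sinh y / Real.cosh y)
      ((Real.cosh x * Real.cosh x - Real.sinh x * Real.sinh x) / Real.cosh x ^ 2) x :=
    (Real.hasDerivAt_sinh x).div (Real.hasDerivAt_cosh x) (Real.cosh_pos x).ne'
  have heq : (Real.cosh x * Real.cosh x - Real.sinh x * Real.sinh x) / Real.cosh x ^ 2
      = 1 - Real.tanh x ^ 2 := by
    rw [Real.tanh_eq_sinh_div_cosh]
    have hc := (Real.cosh_pos x).ne'
    field_simp
  rw [heq] at h
  exact h.congr_of_eventuallyEq (by filter_upwards with y using (Real.tanh_eq_sinh_div_cosh y))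

/-- bounded continuous times Gaussian weight is integrable -/
lemma integrable_bdd_mul_gφ {f : ℝ → ℝ} (hf : Continuous f) {C : ℝ}
    (hC : ∀ z, |f z| ≤ C) : Integrable (fun z => f z * gφ z) :=
  integrable_gφ.bdd_mul hf.aestronglyMeasurable (Filter.Eventually.of_forall (by simpa using hC))

noncomputable def Gfun (r : ℝ) : ℝ := ∫ z : ℝ, Real.tanh (r ^ 2 + r * z) * gφ z

lemma continuous_tanh' : Continuous Real.tanh := by
  have h : Differentiable ℝ Real.tanh := fun x => (hasDerivAt_tanh x).differentiableAt
  exact h.continuous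

lemma cont_tanh_aff (r : ℝ) : Continuous (fun z : ℝ => Real.tanh (r ^ 2 + r * z)) :=
  continuous_tanh'.comp (by continuity)

lemma integrable_tanh_gφ (r : ℝ) :
    Integrable (fun z => Real.tanh (r ^ 2 + r * z) * gφ z) :=
  integrable_bdd_mul_gφ (cont_tanh_aff r) (fun z => abs_tanh_le_one _)

lemma Gfun_le_one (r : ℝ) : Gfun r ≤ 1 := by
  have h : Gfun r ≤ ∫ z : ℝ, gφ z := by
    apply integral_mono (integrable_tanh_gφ r) integrable_gφ
    intro z
    exact mul_le_of_le_one_left (gφ_nonneg z) (_root_.tanh_lt_one (r ^ 2 + r * z)).le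
  simpa [integral_gφ] using h

lemma mmse_eq_Gfun {s : ℝ} (hs : 0 ≤ s) : mmse s = 1 - Gfun (Real.sqrt s) := by
  unfold mmse Gfun gφ
  rw [Real.sq_sqrt hs]

lemma mmse_nonneg {s : ℝ} (hs : 0 ≤ s) : 0 ≤ mmse s := by
  rw [mmse_eq_Gfun hs]
  linarith [Gfun_le_one (Real.sqrt s)]

lemma hasDerivAt_gφ (z : ℝ) : HasDerivAt gφ (-z * gφ z) z := by
  have h1 : HasDerivAt (fun z : ℝ => -z ^ 2 / 2) (-z) z := by
    have := ((hasDerivAt_pow 2 z).neg).div_const 2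
    simpa using this.congr_deriv (by push_cast; ring)
  have h2 := (Real.hasDerivAt_exp (-z ^ 2 / 2)).comp z h1
  have h3 := h2.const_mul (Real.sqrt (2 * Real.pi))⁻¹
  have : (Real.sqrt (2 * Real.pi))⁻¹ * (Real.exp (-z ^ 2 / 2) * -z) = -z * gφ z := by
    unfold gφ; ring
  rw [this] at h3
  exact h3

lemma integrable_abs_mul_gφ : Integrable (fun z : ℝ => |z| * gφ z) := by
  have h0 : Integrable (fun x : ℝ => x ^ (1:ℝ) * Real.exp (-(1/2) * x ^ 2)) :=
    integrable_rpow_mul_exp_neg_mul_sq (by norm_num) (by norm_num)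
  have h1 : Integrable (fun x : ℝ => x * Real.exp (-x ^ 2 / 2)) := by
    convert h0 using 2 with x
    rw [Real.rpow_one]; ring_nf
  have h2 := h1.abs
  have h3 : Integrable (fun x : ℝ => |x| * Real.exp (-x ^ 2 / 2)) := by
    convert h2 using 2 with x
    rw [abs_mul, abs_of_pos (Real.exp_pos _)]
  have h4 := h3.const_mul (Real.sqrt (2 * Real.pi))⁻¹
  convert h4 using 2 with x
  unfold gφ; ring

lemma integrable_onePlusAbs_mul_gφ (C : ℝ) :
    Integrable (fun z : ℝ => C * (1 + |z|) * gφ z) := by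
  have := (integrable_gφ.add integrable_abs_mul_gφ).const_mul C
  convert this using 2 with z
  simp only [Pi.add_apply]
  ring

lemma integrable_linbdd_mul_gφ {f : ℝ → ℝ} (hf : Continuous f) {C : ℝ}
    (h : ∀ z, |f z| ≤ C * (1 + |z|)) : Integrable (fun z => f z * gφ z) := by
  apply (integrable_onePlusAbs_mul_gφ C).mono' (hf.mul (by
    have : Continuous gφ := by
      unfold gφ; continuity
    exact this)).aestronglyMeasurable
  filter_upwards with z
  rw [Real.norm_eq_abs, Pi.mul_apply, abs_mul, abs_of_nonneg (gφ_nonneg z)]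
  exact mul_le_mul_of_nonneg_right (h z) (gφ_nonneg z)

section IBP

variable (r : ℝ)

lemma cont_c : Continuous (fun z : ℝ => 1 - Real.tanh (r ^ 2 + r * z) ^ 2) :=
  continuous_const.sub ((cont_tanh_aff r).pow 2)

lemma c_nonneg (z : ℝ) : 0 ≤ 1 - Real.tanh (r ^ 2 + r * z) ^ 2 :=
  sub_nonneg.2 (tanh_sq_le_one _)

lemma c_le_one (z : ℝ) : 1 - Real.tanh (r ^ 2 + r * z) ^ 2 ≤ 1 := by
  nlinarith [sq_nonneg (Real.tanh (r ^ 2 + r * z))]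

lemma abs_c_le_one (z : ℝ) : |1 - Real.tanh (r ^ 2 + r * z) ^ 2| ≤ 1 :=
  abs_le.2 ⟨by nlinarith [c_nonneg r z], c_le_one r z⟩

lemma I1 : Integrable (fun z => (1 - Real.tanh (r ^ 2 + r * z) ^ 2) * gφ z) :=
  integrable_bdd_mul_gφ (cont_c r) (abs_c_le_one r)

lemma I2 : Integrable (fun z => (z * (1 - Real.tanh (r ^ 2 + r * z) ^ 2)) * gφ z) := by
  apply integrable_linbdd_mul_gφ (continuous_id.mul (cont_c r)) (C := 1)
  intro z
  simp only [Pi.mul_apply, id_eq]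
  rw [abs_mul]
  have h1 := abs_c_le_one r z
  have h2 : |z| * |1 - Real.tanh (r ^ 2 + r * z) ^ 2| ≤ |z| * 1 :=
    mul_le_mul_of_nonneg_left h1 (abs_nonneg z)
  nlinarith [abs_nonneg z]

lemma I3 : Integrable (fun z =>
    (Real.tanh (r ^ 2 + r * z) * (1 - Real.tanh (r ^ 2 + r * z) ^ 2)) * gφ z) := by
  apply integrable_bdd_mul_gφ ((cont_tanh_aff r).mul (cont_c r)) (C := 1)
  intro z
  simp only [Pi.mul_apply]
  rw [abs_mul]
  have h1 := abs_tanh_le_one (r ^ 2 + r * z)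
  have h2 := abs_c_le_one r z
  nlinarith [abs_nonneg (Real.tanh (r ^ 2 + r * z)), abs_nonneg (1 - Real.tanh (r ^ 2 + r * z) ^ 2)]

lemma hasDerivAt_T (z : ℝ) : HasDerivAt (fun z => Real.tanh (r ^ 2 + r * z))
    ((1 - Real.tanh (r ^ 2 + r * z) ^ 2) * r) z := by
  have haff : HasDerivAt (fun z : ℝ => r ^ 2 + r * z) r z := by
    have := ((hasDerivAt_id z).const_mul r).const_add (r ^ 2)
    simpa using this
  exact (hasDerivAt_tanh (r ^ 2 + r * z)).comp z haff

lemma ibp : ∫ z : ℝ, (z * (1 - Real.tanh (r ^ 2 + r * z) ^ 2)) * gφ z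
    = ∫ z : ℝ, (-(2 * r) * (Real.tanh (r ^ 2 + r * z) * (1 - Real.tanh (r ^ 2 + r * z) ^ 2))) * gφ z := by
  set T : ℝ → ℝ := fun z => Real.tanh (r ^ 2 + r * z) with hT
  have hderiv : ∀ z : ℝ, HasDerivAt (fun z => -(1 - T z ^ 2) * gφ z)
      ((z * (1 - T z ^ 2) + 2 * r * (T z * (1 - T z ^ 2))) * gφ z) z := by
    intro z
    have h1 : HasDerivAt (fun z => -(1 - T z ^ 2)) (2 * r * (T z * (1 - T z ^ 2))) z := by
      have := (((hasDerivAt_T r z).pow 2).const_sub 1).neg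
      refine this.congr_deriv ?_
      simp only [Nat.cast_ofNat, pow_one]
      ring
    have h2 := h1.mul (hasDerivAt_gφ z)
    refine h2.congr_deriv ?_
    ring
  have hF : Integrable (fun z => -(1 - T z ^ 2) * gφ z) := by
    have := (I1 r).neg
    convert this using 2 with z
    simp [hT]; ring
  have hF' : Integrable (fun z => (z * (1 - T z ^ 2) + 2 * r * (T z * (1 - T z ^ 2))) * gφ z) := by
    have := (I2 r).add ((I3 r).const_mul (2 * r))
    convert this using 2 with z
    · rfl
    simp only [hT, Pi.add_apply]; ring
  have hzero := integral_eq_zero_of_hasDerivAt_of_integrable hderiv hF' hF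
  have hsplit : ∫ z : ℝ, (z * (1 - T z ^ 2) + 2 * r * (T z * (1 - T z ^ 2))) * gφ z
      = (∫ z : ℝ, (z * (1 - T z ^ 2)) * gφ z)
        + ∫ z : ℝ, (2 * r * (T z * (1 - T z ^ 2))) * gφ z := by
    rw [← integral_add (I2 r) (((I3 r).const_mul (2 * r)).congr ?_)]
    · congr 1 with z; simp only [hT]; ring
    · filter_upwards with z; simp only [hT]; ring
  rw [hsplit] at hzero
  have h4 : ∫ z : ℝ, (2 * r * (T z * (1 - T z ^ 2))) * gφ z
      = - ∫ z : ℝ, (-(2 * r) * (T z * (1 - T z ^ 2))) * gφ z := by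
    rw [← integral_neg]
    congr 1 with z; ring
  rw [h4] at hzero
  simp only [hT] at hzero ⊢
  linarith

end IBP

lemma continuous_gφ : Continuous gφ := by unfold gφ; continuity

lemma hasDerivAt_Gfun (r : ℝ) : HasDerivAt Gfun
    (∫ z : ℝ, ((2 * r + z) * (1 - Real.tanh (r ^ 2 + r * z) ^ 2)) * gφ z) r := by
  have key := hasDerivAt_integral_of_dominated_loc_of_deriv_le
    (F := fun (x : ℝ) (z : ℝ) => Real.tanh (x ^ 2 + x * z) * gφ z)
    (F' := fun (x : ℝ) (z : ℝ) => ((2 * x + z) * (1 - Real.tanh (x ^ 2 + x * z) ^ 2)) * gφ z)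
    (x₀ := r) (s := Metric.ball r 1) (bound := fun z => (2 * |r| + 3) * (1 + |z|) * gφ z)
    (Metric.ball_mem_nhds r one_pos) ?_ (integrable_tanh_gφ r) ?_ ?_ ?_ ?_
  · exact key.2
  · filter_upwards with x
    exact ((cont_tanh_aff x).mul continuous_gφ).aestronglyMeasurable
  · exact (((continuous_const.add continuous_id).mul (cont_c r)).mul
      continuous_gφ).aestronglyMeasurable
  · filter_upwards with z
    intro x hx
    have hxr : |x| ≤ |r| + 1 := by
      have : |x - r| < 1 := by simpa [Real.dist_eq] using hx
      have := abs_sub_abs_le_abs_sub x r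
      linarith
    rw [Real.norm_eq_abs, abs_mul, abs_of_nonneg (gφ_nonneg z), abs_mul]
    have h1 : |2 * x + z| ≤ 2 * |x| + |z| := by
      calc |2 * x + z| ≤ |2 * x| + |z| := abs_add_le _ _
      _ = 2 * |x| + |z| := by rw [abs_mul]; norm_num
    have h2 := abs_c_le_one x z
    have h3 : |2 * x + z| * |1 - Real.tanh (x ^ 2 + x * z) ^ 2| ≤ 2 * |x| + |z| := by
      calc |2 * x + z| * |1 - Real.tanh (x ^ 2 + x * z) ^ 2| ≤ (2 * |x| + |z|) * 1 := by
            apply mul_le_mul h1 h2 (abs_nonneg _)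
            positivity
      _ = 2 * |x| + |z| := by ring
    have h4 : 2 * |x| + |z| ≤ (2 * |r| + 3) * (1 + |z|) := by
      nlinarith [abs_nonneg z, abs_nonneg r]
    exact mul_le_mul_of_nonneg_right (h3.trans h4) (gφ_nonneg z)
  · exact integrable_onePlusAbs_mul_gφ (2 * |r| + 3) |>.congr (by
      filter_upwards with z; ring)
  · filter_upwards with z
    intro x _
    have haff : HasDerivAt (fun x : ℝ => x ^ 2 + x * z) (2 * x + z) x := by
      have := (hasDerivAt_pow 2 x).add ((hasDerivAt_id x).mul_const z)
      refine this.congr_deriv ?_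
      simp
    have h1 := (hasDerivAt_tanh (x ^ 2 + x * z)).comp x haff
    have h2 := h1.mul_const (gφ z)
    refine h2.congr_deriv ?_
    ring

lemma deriv_Gfun_form (r : ℝ) :
    (∫ z : ℝ, ((2 * r + z) * (1 - Real.tanh (r ^ 2 + r * z) ^ 2)) * gφ z)
    = 2 * r * ((∫ z : ℝ, (1 - Real.tanh (r ^ 2 + r * z) ^ 2) * gφ z)
        - ∫ z : ℝ, (Real.tanh (r ^ 2 + r * z) * (1 - Real.tanh (r ^ 2 + r * z) ^ 2)) * gφ z) := by
  have hsplit : ∫ z : ℝ, ((2 * r + z) * (1 - Real.tanh (r ^ 2 + r * z) ^ 2)) * gφ z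
      = (∫ z : ℝ, (2 * r) * ((1 - Real.tanh (r ^ 2 + r * z) ^ 2) * gφ z))
        + ∫ z : ℝ, (z * (1 - Real.tanh (r ^ 2 + r * z) ^ 2)) * gφ z := by
    rw [← integral_add (((I1 r).const_mul (2 * r)).congr (by filter_upwards with z; ring)) (I2 r)]
    congr 1 with z; ring
  rw [hsplit, ibp r, integral_const_mul]
  rw [show (∫ z : ℝ, (-(2 * r) * (Real.tanh (r ^ 2 + r * z) * (1 - Real.tanh (r ^ 2 + r * z) ^ 2))) * gφ z)
      = -(2 * r) * ∫ z : ℝ, (Real.tanh (r ^ 2 + r * z) * (1 - Real.tanh (r ^ 2 + r * z) ^ 2)) * gφ z by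
    rw [← integral_const_mul]; congr 1 with z; ring]
  ring

lemma deriv_Gfun_nonneg {r : ℝ} (hr : 0 ≤ r) :
    0 ≤ ∫ z : ℝ, ((2 * r + z) * (1 - Real.tanh (r ^ 2 + r * z) ^ 2)) * gφ z := by
  rw [deriv_Gfun_form r]
  have hAB : (∫ z : ℝ, (Real.tanh (r ^ 2 + r * z) * (1 - Real.tanh (r ^ 2 + r * z) ^ 2)) * gφ z)
      ≤ ∫ z : ℝ, (1 - Real.tanh (r ^ 2 + r * z) ^ 2) * gφ z := by
    apply integral_mono (I3 r) (I1 r)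
    intro z
    have h1 := _root_.tanh_lt_one (r ^ 2 + r * z)
    have h2 := c_nonneg r z
    have h3 := gφ_nonneg z
    have : Real.tanh (r ^ 2 + r * z) * (1 - Real.tanh (r ^ 2 + r * z) ^ 2)
        ≤ 1 - Real.tanh (r ^ 2 + r * z) ^ 2 := by nlinarith
    exact mul_le_mul_of_nonneg_right this h3
  nlinarith

lemma Gfun_monotoneOn : MonotoneOn Gfun (Ici (0:ℝ)) := by
  have hdiff : Differentiable ℝ Gfun := fun r => (hasDerivAt_Gfun r).differentiableAt
  apply monotoneOn_of_deriv_nonneg (convex_Ici 0) hdiff.continuous.continuousOn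
    hdiff.differentiableOn
  intro x hx
  rw [interior_Ici] at hx
  rw [(hasDerivAt_Gfun x).deriv]
  exact deriv_Gfun_nonneg (le_of_lt hx)

lemma mmse_antitone {s t : ℝ} (hs : 0 ≤ s) (hst : s ≤ t) : mmse t ≤ mmse s := by
  have ht : 0 ≤ t := hs.trans hst
  rw [mmse_eq_Gfun hs, mmse_eq_Gfun ht]
  have := Gfun_monotoneOn (Real.sqrt_nonneg s) (Real.sqrt_nonneg t) (Real.sqrt_le_sqrt hst)
  linarith


/-- **Monotonicity of density evolution in the loads.**
If `0 ≤ α_l ≤ α'_l` for all `l` and `sir`, `sir'` are the DE sequences with loads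
`(α_l)` and `(α'_l)` respectively (same base matrix with unit column square-sums and
same noise variance `σ² > 0`), then `sir_m(i) ≥ sir'_m(i)` for all `i` and `m`. -/
theorem de_antitone_in_load (L : ℕ) (hL : 1 ≤ L) (B : Fin L → Fin L → ℝ)
    (hB : ∀ m : Fin L, ∑ l : Fin L, (B l m) ^ 2 = 1)
    (σ2 : ℝ) (hσ2 : 0 < σ2)
    (α α' : Fin L → ℝ) (hα : ∀ l, 0 ≤ α l) (hαα' : ∀ l, α l ≤ α' l)
    (sir sir' : ℕ → Fin L → ℝ)
    (hsir0 : ∀ m, sir 0 m = 0) (hsir0' : ∀ m, sir' 0 m = 0)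
    (hsir : ∀ i m, sir (i + 1) m =
      ∑ l : Fin L,
        (B l m) ^ 2 / (σ2 + α l * ∑ m' : Fin L, (B l m') ^ 2 * mmse (sir i m')))
    (hsir' : ∀ i m, sir' (i + 1) m =
      ∑ l : Fin L,
        (B l m) ^ 2 / (σ2 + α' l * ∑ m' : Fin L, (B l m') ^ 2 * mmse (sir' i m'))) :
    ∀ i : ℕ, ∀ m : Fin L, sir' i m ≤ sir i m := by
  have key : ∀ i : ℕ, ∀ m : Fin L, 0 ≤ sir' i m ∧ sir' i m ≤ sir i m := by
    intro i
    induction i with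
    | zero => intro m; rw [hsir0, hsir0']; exact ⟨le_rfl, le_rfl⟩
    | succ i ih =>
      intro m
      have hα' : ∀ l, 0 ≤ α' l := fun l => (hα l).trans (hαα' l)
      -- nonnegativity of the sir' entries at time i
      have h0' : ∀ m', 0 ≤ sir' i m' := fun m' => (ih m').1
      have h0 : ∀ m', 0 ≤ sir i m' := fun m' => (h0' m').trans (ih m').2
      set S : Fin L → ℝ := fun l => ∑ m' : Fin L, (B l m') ^ 2 * mmse (sir i m') with hS
      set S' : Fin L → ℝ := fun l => ∑ m' : Fin L, (B l m') ^ 2 * mmse (sir' i m') with hS'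
      have hS0 : ∀ l, 0 ≤ S l := by
        intro l
        apply Finset.sum_nonneg
        intro m' _
        exact mul_nonneg (sq_nonneg _) (mmse_nonneg (h0 m'))
      have hSS' : ∀ l, S l ≤ S' l := by
        intro l
        apply Finset.sum_le_sum
        intro m' _
        exact mul_le_mul_of_nonneg_left (mmse_antitone (h0' m') (ih m').2) (sq_nonneg _)
      have hden_pos : ∀ l, 0 < σ2 + α l * S l := by
        intro l
        have := mul_nonneg (hα l) (hS0 l)
        linarith
      have hden_le : ∀ l, σ2 + α l * S l ≤ σ2 + α' l * S' l := by
        intro l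
        have := mul_le_mul (hαα' l) (hSS' l) (hS0 l) (hα' l)
        linarith
      have hden_pos' : ∀ l, 0 < σ2 + α' l * S' l :=
        fun l => lt_of_lt_of_le (hden_pos l) (hden_le l)
      rw [hsir, hsir']
      constructor
      · apply Finset.sum_nonneg
        intro l _
        exact div_nonneg (sq_nonneg _) (hden_pos' l).le
      · apply Finset.sum_le_sum
        intro l _
        apply div_le_div_of_nonneg_left (sq_nonneg _) (hden_pos l) (hden_le l)
  exact fun i m => (key i m).2
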